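/- Let α = 23/6, β = 23/15, and T > 0. Let e ⊆ R be minimal for threshold T/α with v_j < T/α for every j ∈ e, and let B be a finite family of at least two pairwise disjoint sets, each minimal for threshold T/α, each having all its elements of value less than T/α, and each having nonempty intersection with e. Then ∑_{j ∈ e ∪ ⋃_{e'∈B} e'} min{1/3, β·v_j/T} ≤ (4/5)·|B|. -/

import Mathlib

/-- Let `α = 23/6`, `β = 23/15` and `T > 0`.  Let `e` be a finite set of
resources that is minimal for threshold `T/α` with all its elements of value
`< T/α`, and let `B` be a finite family of at least two pairwise disjoint
sets, each minimal for threshold `T/α`, each with all elements of value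
`< T/α`, and each meeting `e`.  Then
`∑_{j ∈ e ∪ ⋃ B} min (1/3) (β * v j / T) ≤ (4/5) * |B|`. -/
theorem santa_claus_multiply_blocked_edge_bound
    {R : Type*} [DecidableEq R]
    (v : R → ℝ) (hv : ∀ j, 0 < v j) (T : ℝ) (hT : 0 < T)
    (e : Finset R)
    (he_min : T / (23 / 6) ≤ ∑ j ∈ e, v j ∧
      ∀ e' ⊂ e, ∑ j ∈ e', v j < T / (23 / 6))
    (he_thin : ∀ j ∈ e, v j < T / (23 / 6))
    (B : Finset (Finset R)) (hB_card : 2 ≤ B.card)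
    (hB_disj : ∀ b₁ ∈ B, ∀ b₂ ∈ B, b₁ ≠ b₂ → Disjoint b₁ b₂)
    (hB_min : ∀ b ∈ B, T / (23 / 6) ≤ ∑ j ∈ b, v j ∧
      ∀ b' ⊂ b, ∑ j ∈ b', v j < T / (23 / 6))
    (hB_thin : ∀ b ∈ B, ∀ j ∈ b, v j < T / (23 / 6))
    (hB_int : ∀ b ∈ B, (b ∩ e).Nonempty) :
    ∑ j ∈ e ∪ B.biUnion id, min (1 / 3) ((23 / 15) * v j / T) ≤
      (4 / 5) * (B.card : ℝ) := by

  have htpos : 0 < T / (23 / 6) := by positivity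
  set t := T / (23 / 6) with ht_def
  -- e is nonempty
  have heNe : e.Nonempty := by
    rcases Finset.eq_empty_or_nonempty e with h | h
    · exfalso
      have h1 := he_min.1
      rw [h] at h1
      simp at h1
      linarith
    · exact h
  have hve : ∑ j ∈ e, v j < 2 * t := by
    obtain ⟨j, hj⟩ := heNe
    have h1 : ∑ i ∈ e.erase j, v i < t := he_min.2 _ (Finset.erase_ssubset hj)
    have h2 : v j + ∑ i ∈ e.erase j, v i = ∑ i ∈ e, v i :=
      Finset.add_sum_erase e v hj
    have h3 := he_thin j hj
    linarith
  have hvb : ∀ b ∈ B, ∑ j ∈ b \ e, v j < t := by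
    intro b hb
    apply (hB_min b hb).2
    obtain ⟨x, hx⟩ := hB_int b hb
    rw [Finset.mem_inter] at hx
    refine (Finset.ssubset_iff_of_subset (Finset.sdiff_subset)).mpr ?_
    exact ⟨x, hx.1, by simp [hx.2]⟩
  set U := B.biUnion id with hU
  have hBne : B.Nonempty := Finset.card_pos.mp (by omega)
  have hUe : U \ e = B.biUnion (fun b => b \ e) := by
    ext x
    simp only [hU, Finset.mem_sdiff, Finset.mem_biUnion, id]
    tauto
  have hdisj : (↑B : Set (Finset R)).PairwiseDisjoint (fun b => b \ e) := by
    intro b₁ hb₁ b₂ hb₂ hne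
    exact (hB_disj b₁ hb₁ b₂ hb₂ hne).mono Finset.sdiff_subset Finset.sdiff_subset
  have hsum2 : ∑ j ∈ U \ e, v j < (B.card : ℝ) * t := by
    rw [hUe, Finset.sum_biUnion hdisj]
    calc ∑ b ∈ B, ∑ j ∈ b \ e, v j < ∑ b ∈ B, t :=
          Finset.sum_lt_sum_of_nonempty hBne (fun b hb => hvb b hb)
      _ = (B.card : ℝ) * t := by rw [Finset.sum_const, nsmul_eq_mul]
  have hsplit : ∑ j ∈ e ∪ U, v j = ∑ j ∈ e, v j + ∑ j ∈ U \ e, v j := by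
    rw [← Finset.sum_union Finset.disjoint_sdiff, Finset.union_sdiff_self_eq_union]
  have htot : ∑ j ∈ e ∪ U, v j < ((B.card : ℝ) + 2) * t := by
    rw [hsplit]; linarith
  have hstep1 : ∑ j ∈ e ∪ U, min (1 / 3) ((23 / 15) * v j / T)
      ≤ ∑ j ∈ e ∪ U, (23 / 15) * v j / T :=
    Finset.sum_le_sum (fun j _ => min_le_right _ _)
  have hstep2 : ∑ j ∈ e ∪ U, (23 / 15) * v j / T
      = (23 / 15 / T) * ∑ j ∈ e ∪ U, v j := by
    rw [Finset.mul_sum]; apply Finset.sum_congr rfl; intro j _; ring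
  have hcard : (2 : ℝ) ≤ (B.card : ℝ) := by exact_mod_cast hB_card
  have hfin : (23 / 15 / T) * (((B.card : ℝ) + 2) * t) ≤ (4 / 5) * (B.card : ℝ) := by
    rw [ht_def]
    field_simp
    ring_nf
    nlinarith [hT, hcard]
  have hmul : (23 / 15 / T) * ∑ j ∈ e ∪ U, v j
      ≤ (23 / 15 / T) * (((B.card : ℝ) + 2) * t) := by
    apply mul_le_mul_of_nonneg_left (le_of_lt htot) (by positivity)
  linarith
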